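/- arXiv:2208.12626 — 2 statements merged into one kernel-verified Lean document; each statement's English description precedes it below -/
import Mathlib

section
/- Let n ≥ 2 and assume condition (ON). Then the graph G(V) is connected if and only if one of the following holds: (a) n = 2 and K has exactly 4 elements; (b) n = 3 and K does not have exactly 4 elements; (c) n ≥ 4. -/
namespace FramePaper

variable {K : Type*} [Field K]

/-- The standard Hermitian form `Ψ(v,w) = ∑ i, v i * τ (w i)` on `Fin n → K`. -/
def Psi (τ : K → K) {n : ℕ} (v w : Fin n → K) : K :=
  ∑ i, v i * τ (w i)

lemma Psi_add_left (τ : K → K) {n : ℕ} (a b w : Fin n → K) :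
    Psi τ (a + b) w = Psi τ a w + Psi τ b w := by
  simp [Psi, add_mul, Finset.sum_add_distrib]

lemma Psi_smul_left (τ : K → K) {n : ℕ} (c : K) (a w : Fin n → K) :
    Psi τ (c • a) w = c * Psi τ a w := by
  simp [Psi, Finset.mul_sum, mul_assoc]

/-- The orthogonal complement `S^⊥ = {v | ∀ s ∈ S, Ψ(v,s) = 0}`. -/
def perp (τ : K → K) {n : ℕ} (S : Submodule K (Fin n → K)) :
    Submodule K (Fin n → K) where
  carrier := {v | ∀ s ∈ S, Psi τ v s = 0}
  add_mem' := by
    intro a b ha hb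
    show ∀ s ∈ S, Psi τ (a + b) s = 0
    intro s hs
    rw [Psi_add_left, ha s hs, hb s hs, add_zero]
  zero_mem' := by
    show ∀ s ∈ S, Psi τ 0 s = 0
    intro s hs
    simp [Psi]
  smul_mem' := by
    intro c a ha
    show ∀ s ∈ S, Psi τ (c • a) s = 0
    intro s hs
    rw [Psi_smul_left, ha s hs, mul_zero]

/-- A subspace `S` is non-degenerate iff `S ⊓ S^⊥ = ⊥`. -/
def Nondeg (τ : K → K) {n : ℕ} (S : Submodule K (Fin n → K)) : Prop :=
  S ⊓ perp τ S = ⊥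

/-- Vertices of `G(V)`: the `1`-dimensional non-degenerate subspaces. -/
def IsVertex (τ : K → K) {n : ℕ} (S : Submodule K (Fin n → K)) : Prop :=
  Module.finrank K S = 1 ∧ Nondeg τ S

/-- The graph `G(V)` on the `1`-dimensional non-degenerate subspaces of `V = Fin n → K`,
with `S, W` adjacent iff `S ≠ W` and `Ψ(s,w) = 0` for all `s ∈ S`, `w ∈ W`. -/
def FrameGraph (τ : K →+* K) (hτ2 : ∀ x, τ (τ x) = x) (n : ℕ) :
    SimpleGraph {S : Submodule K (Fin n → K) // IsVertex (⇑τ) S} where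
  Adj S W := S ≠ W ∧ ∀ s ∈ S.1, ∀ w ∈ W.1, Psi (⇑τ) s w = 0
  symm := ⟨by
    rintro S W ⟨hne, h⟩
    refine ⟨hne.symm, fun w hw s hs => ?_⟩
    have key : Psi (⇑τ) w s = τ (Psi (⇑τ) s w) := by
      simp only [Psi, map_sum, map_mul, hτ2]
      exact Finset.sum_congr rfl fun i _ => mul_comm _ _
    rw [key, h s hs w hw, map_zero]⟩
  loopless := ⟨fun S h => h.1 rfl⟩


-- ### basic Psi lemmas

variable (τ : K →+* K)

lemma Psi_conj {n : ℕ} (hτ2 : ∀ x, τ (τ x) = x) (v w : Fin n → K) :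
    Psi (⇑τ) w v = τ (Psi (⇑τ) v w) := by
  simp only [Psi, map_sum, map_mul, hτ2]
  exact Finset.sum_congr rfl fun i _ => mul_comm _ _

lemma Psi_add_right {n : ℕ} (v a b : Fin n → K) :
    Psi (⇑τ) v (a + b) = Psi (⇑τ) v a + Psi (⇑τ) v b := by
  simp [Psi, mul_add, Finset.sum_add_distrib]

lemma Psi_smul_right {n : ℕ} (c : K) (v a : Fin n → K) :
    Psi (⇑τ) v (c • a) = τ c * Psi (⇑τ) v a := by
  simp [Psi, Finset.mul_sum]; ring_nf
  exact Finset.sum_congr rfl fun i _ => by ring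

lemma Psi_zero_self {n : ℕ} : Psi (⇑τ) (0 : Fin n → K) 0 = 0 := by simp [Psi]

-- vertex from anisotropic vector
lemma vertex_of {n : ℕ} {v : Fin n → K} (hv : Psi (⇑τ) v v ≠ 0) :
    IsVertex (⇑τ) (Submodule.span K {v}) := by
  have hv0 : v ≠ 0 := by rintro rfl; exact hv (Psi_zero_self τ)
  constructor
  · exact finrank_span_singleton hv0
  · rw [Nondeg, Submodule.eq_bot_iff]
    rintro x ⟨hx1, hx2⟩
    obtain ⟨c, rfl⟩ := Submodule.mem_span_singleton.mp hx1
    have := hx2 v (Submodule.mem_span_singleton_self v)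
    rw [Psi_smul_left] at this
    rcases mul_eq_zero.mp this with h | h
    · rw [h, zero_smul]
    · exact absurd h hv

lemma exists_gen {n : ℕ} {S : Submodule K (Fin n → K)} (hS : IsVertex (⇑τ) S) :
    ∃ v : Fin n → K, S = Submodule.span K {v} ∧ Psi (⇑τ) v v ≠ 0 := by
  obtain ⟨hfr, hnd⟩ := hS
  have hSne : S ≠ ⊥ := by
    intro h; rw [h] at hfr; simp at hfr
  obtain ⟨v, hvS, hv0⟩ := Submodule.exists_mem_ne_zero_of_ne_bot hSne
  have hle : Submodule.span K {v} ≤ S := Submodule.span_le.mpr (by simpa using hvS)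
  have heq : Submodule.span K {v} = S := by
    apply Submodule.eq_of_le_of_finrank_le hle
    rw [hfr, finrank_span_singleton hv0]
  refine ⟨v, heq.symm, ?_⟩
  intro hpsi
  have hvperp : v ∈ perp (⇑τ) S := by
    intro s hs
    rw [← heq] at hs
    obtain ⟨c, rfl⟩ := Submodule.mem_span_singleton.mp hs
    rw [Psi_smul_right, hpsi, mul_zero]
  have : v ∈ S ⊓ perp (⇑τ) S := ⟨hvS, hvperp⟩
  rw [hnd] at this
  exact hv0 this

lemma adj_of {n : ℕ} (hτ2 : ∀ x, τ (τ x) = x) {u w : Fin n → K}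
    (hu : Psi (⇑τ) u u ≠ 0) (hw : Psi (⇑τ) w w ≠ 0) (huw : Psi (⇑τ) u w = 0) :
    (FrameGraph τ hτ2 n).Adj ⟨_, vertex_of τ hu⟩ ⟨_, vertex_of τ hw⟩ := by
  constructor
  · intro h
    have h' : Submodule.span K {u} = Submodule.span K {w} := congrArg Subtype.val h
    have hwmem : w ∈ Submodule.span K {u} := h' ▸ Submodule.mem_span_singleton_self w
    obtain ⟨c, rfl⟩ := Submodule.mem_span_singleton.mp hwmem
    rw [Psi_smul_right] at huw
    rcases mul_eq_zero.mp huw with h0 | h0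
    · have : c = 0 := by
        have := congrArg τ h0; rwa [hτ2, map_zero] at this
      rw [this, zero_smul] at hw
      exact hw (Psi_zero_self τ)
    · exact hu h0
  · intro s hs w' hw'
    obtain ⟨c1, rfl⟩ := Submodule.mem_span_singleton.mp hs
    obtain ⟨c2, rfl⟩ := Submodule.mem_span_singleton.mp hw'
    rw [Psi_smul_left, Psi_smul_right, huw]
    ring

-- polarization
lemma totally_isotropic {n : ℕ} (hτ2 : ∀ x, τ (τ x) = x) (hτne : (⇑τ : K → K) ≠ id)
    {S : Submodule K (Fin n → K)} (h : ∀ x ∈ S, Psi (⇑τ) x x = 0) :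
    ∀ x ∈ S, ∀ y ∈ S, Psi (⇑τ) x y = 0 := by
  obtain ⟨lam, hlam⟩ : ∃ l : K, τ l ≠ l := by
    by_contra hc
    push_neg at hc
    exact hτne (funext fun x => hc x)
  intro x hx y hy
  have h1 : Psi (⇑τ) x y + Psi (⇑τ) y x = 0 := by
    have := h (x + y) (S.add_mem hx hy)
    rw [Psi_add_left, Psi_add_right, Psi_add_right, h x hx, h y hy] at this
    linear_combination this
  have h2 : τ lam * Psi (⇑τ) x y + lam * Psi (⇑τ) y x = 0 := by
    have := h (x + lam • y) (S.add_mem hx (S.smul_mem lam hy))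
    rw [Psi_add_left, Psi_add_right, Psi_add_right, Psi_smul_left, Psi_smul_right,
      Psi_smul_left, Psi_smul_right, h x hx, h y hy] at this
    linear_combination this
  have hyx : Psi (⇑τ) y x = -Psi (⇑τ) x y := by linear_combination h1
  rw [hyx] at h2
  have : (τ lam - lam) * Psi (⇑τ) x y = 0 := by linear_combination h2
  rcases mul_eq_zero.mp this with h0 | h0
  · exact absurd (by linear_combination h0) hlam
  · exact h0

-- walk trapping
lemma walk_trap {V : Type*} {G : SimpleGraph V} (P : V → Prop)
    (hP : ∀ x y, G.Adj x y → P x → P y) {u w : V} (h : G.Reachable u w) (hu : P u) : P w := by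
  obtain ⟨p⟩ := h
  induction p with
  | nil => exact hu
  | cons h' p ih => exact ih (hP _ _ h' hu)



variable [RingHomSurjective τ]

def Bstd (n : ℕ) : LinearMap.BilinForm K (Fin n → K) :=
  LinearMap.mk₂ K (fun v w => ∑ i, v i * w i)
    (fun a b w => by simp [add_mul, Finset.sum_add_distrib])
    (fun c a w => by simp [Finset.mul_sum, mul_assoc])
    (fun v a b => by simp [mul_add, Finset.sum_add_distrib])
    (fun c v a => by simp [Finset.mul_sum]; exact Finset.sum_congr rfl fun i _ => by ring)

lemma Bstd_apply {n : ℕ} (v w : Fin n → K) : Bstd n v w = ∑ i, v i * w i := rfl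

lemma Bstd_symm {n : ℕ} (v w : Fin n → K) : Bstd n v w = Bstd n w v := by
  simp only [Bstd_apply]
  exact Finset.sum_congr rfl fun i _ => mul_comm _ _

lemma Bstd_refl {n : ℕ} : (Bstd (K := K) n).IsRefl := by
  intro v w h
  rw [Bstd_symm] at h; exact h

lemma Bstd_nondeg {n : ℕ} : (Bstd (K := K) n).Nondegenerate := by
  refine (LinearMap.IsRefl.nondegenerate_iff_separatingLeft (B := Bstd (K := K) n)
    (fun v w h => by rw [Bstd_symm] at h; exact h)).mpr ?_
  intro v hv
  funext j
  have := hv (Pi.single j 1)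
  rw [Bstd_apply] at this
  simpa [Pi.single_apply, Finset.sum_ite_eq'] using this

def Tconj (n : ℕ) : (Fin n → K) →ₛₗ[τ] (Fin n → K) where
  toFun v := fun i => τ (v i)
  map_add' a b := by funext i; simp
  map_smul' c v := by funext i; simp

lemma Tconj_apply {n : ℕ} (v : Fin n → K) (i : Fin n) : Tconj τ n v i = τ (v i) := rfl


lemma finrank_map_Tconj_le {n : ℕ} (S : Submodule K (Fin n → K)) :
    Module.finrank K (S.map (Tconj τ n)) ≤ Module.finrank K S := by
  classical
  set k := Module.finrank K S with hk
  let b : Module.Basis (Fin k) K S := Module.finBasis K S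
  have hspan : S = Submodule.span K (Set.range fun i => (b i : Fin n → K)) := by
    conv_lhs => rw [← Submodule.map_subtype_top S]
    rw [← b.span_eq, Submodule.map_span]
    congr 1
    ext x
    simp [Set.range_comp]
  have hmap : S.map (Tconj τ n) =
      Submodule.span K (Set.range fun i => Tconj τ n (b i : Fin n → K)) := by
    have h1 := congrArg (Submodule.map (Tconj τ n)) hspan
    rw [h1, Submodule.map_span]
    congr 1
    ext x
    constructor
    · rintro ⟨y, ⟨i, rfl⟩, rfl⟩; exact ⟨i, rfl⟩
    · rintro ⟨i, rfl⟩; exact ⟨b i, ⟨i, rfl⟩, rfl⟩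
  rw [hmap]
  have := finrank_span_le_card (R := K) (Set.range fun i => Tconj τ n (b i : Fin n → K))
  refine this.trans ?_
  rw [Set.toFinset_range]
  exact (Finset.card_image_le).trans (by simp)

lemma map_Tconj_map_Tconj {n : ℕ} (hτ2 : ∀ x, τ (τ x) = x) (S : Submodule K (Fin n → K)) :
    (S.map (Tconj τ n)).map (Tconj τ n) = S := by
  ext x
  simp only [Submodule.mem_map]
  constructor
  · rintro ⟨y, ⟨z, hz, rfl⟩, rfl⟩
    have hxz : (Tconj τ n) ((Tconj τ n) z) = z := funext fun i => hτ2 (z i)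
    rw [hxz]; exact hz
  · intro hx
    exact ⟨Tconj τ n x, ⟨x, hx, rfl⟩, funext fun i => hτ2 (x i)⟩

lemma finrank_map_Tconj {n : ℕ} (hτ2 : ∀ x, τ (τ x) = x) (S : Submodule K (Fin n → K)) :
    Module.finrank K (S.map (Tconj τ n)) = Module.finrank K S := by
  refine le_antisymm (finrank_map_Tconj_le τ S) ?_
  conv_lhs => rw [← map_Tconj_map_Tconj τ hτ2 S]
  exact finrank_map_Tconj_le τ _

lemma perp_eq_orthogonal {n : ℕ} (S : Submodule K (Fin n → K)) :
    perp (⇑τ) S = (Bstd n).orthogonal (S.map (Tconj τ n)) := by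
  ext v
  constructor
  · intro hv
    intro y hy
    obtain ⟨s, hs, rfl⟩ := Submodule.mem_map.mp hy
    have := hv s hs
    show Bstd n (Tconj τ n s) v = 0
    rw [Bstd_symm]
    simpa [Psi, Bstd_apply, Tconj_apply] using this
  · intro hv s hs
    have h2 : Bstd n (Tconj τ n s) v = 0 := hv (Tconj τ n s) (Submodule.mem_map_of_mem hs)
    rw [Bstd_symm] at h2
    simpa [Psi, Bstd_apply, Tconj_apply] using h2

lemma finrank_perp {n : ℕ} (hτ2 : ∀ x, τ (τ x) = x) (S : Submodule K (Fin n → K)) :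
    Module.finrank K (perp (⇑τ) S) = n - Module.finrank K S := by
  rw [perp_eq_orthogonal τ S,
    LinearMap.BilinForm.finrank_orthogonal Bstd_nondeg,
    finrank_map_Tconj τ hτ2 S]
  congr 1
  simp [Module.finrank_fintype_fun_eq_card]



-- If univ = {a,b,c,d} with 4 distinct elements then Nat.card K = 4
lemma card_eq_four_of_univ {a b c d : K} (hab : a ≠ b) (hac : a ≠ c) (had : a ≠ d)
    (hbc : b ≠ c) (hbd : b ≠ d) (hcd : c ≠ d)
    (huniv : ∀ x : K, x = a ∨ x = b ∨ x = c ∨ x = d) : Nat.card K = 4 := by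
  classical
  have huniv' : (Set.univ : Set K) = {a, b, c, d} := by
    ext x
    simp only [Set.mem_univ, Set.mem_insert_iff, Set.mem_singleton_iff, true_iff]
    exact huniv x
  rw [← Set.ncard_univ, huniv']
  rw [Set.ncard_insert_of_notMem (by simp [hab, hac, had]) (Set.toFinite _),
    Set.ncard_insert_of_notMem (by simp [hbc, hbd]) (Set.toFinite _),
    Set.ncard_insert_of_notMem (by simp [hcd]) (Set.toFinite _),
    Set.ncard_singleton]

-- char 2 + all elements outside {0,1} are roots of x^2+x+1 + some y moved by τ ⇒ card = 4
lemma card_eq_four_of_quad (h2 : (2 : K) = 0)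
    (hq : ∀ x : K, x ≠ 0 → x ≠ 1 → x * x + x + 1 = 0)
    {y : K} (hy0 : y ≠ 0) (hy1 : y ≠ 1) : Nat.card K = 4 := by
  have h10 : (1 : K) ≠ 0 := one_ne_zero
  have hy : y * y + y + 1 = 0 := hq y hy0 hy1
  have hyp10 : y + 1 ≠ 0 := by
    intro h
    have : y = 1 := by linear_combination h - h2
    exact hy1 this
  have hyp11 : y + 1 ≠ 1 := by
    intro h; exact hy0 (by linear_combination h)
  have hypy : y + 1 ≠ y := by
    intro h; exact h10 (by linear_combination h)
  refine card_eq_four_of_univ (a := 0) (b := 1) (c := y) (d := y + 1)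
    (Ne.symm h10) (Ne.symm hy0) (Ne.symm hyp10) (Ne.symm hy1) (Ne.symm hyp11) (Ne.symm hypy) ?_
  intro x
  by_cases hx0 : x = 0
  · exact Or.inl hx0
  by_cases hx1 : x = 1
  · exact Or.inr (Or.inl hx1)
  have hx : x * x + x + 1 = 0 := hq x hx0 hx1
  have : (x - y) * (x - (y + 1)) = 0 := by linear_combination hx - hy + (y - x + y*y - x*y) * h2
  rcases mul_eq_zero.mp this with h | h
  · exact Or.inr (Or.inr (Or.inl (by linear_combination h)))
  · exact Or.inr (Or.inr (Or.inr (by linear_combination h)))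


-- Properties of a 4-element field with involution
lemma card_four_props (hτne : (⇑τ : K → K) ≠ id) (hτ2 : ∀ x, τ (τ x) = x)
    (hcard : Nat.card K = 4) :
    (2 : K) = 0 ∧ ∀ x : K, x ≠ 0 → x * τ x = 1 := by
  have hfin : Finite K := (Nat.card_ne_zero.mp (by omega)).2
  haveI := Fintype.ofFinite K
  have hcard' : Fintype.card K = 4 := by rw [← Nat.card_eq_fintype_card]; exact hcard
  have h4 : (4 : K) = 0 := by
    have := FiniteField.cast_card_eq_zero K
    rwa [hcard'] at this
  have h2 : (2 : K) = 0 := by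
    have : (2 : K) * 2 = 0 := by linear_combination h4
    rcases mul_eq_zero.mp this with h | h <;> exact h
  refine ⟨h2, ?_⟩
  -- first: fixed points of τ are exactly {0,1}
  have hfix : ∀ z : K, τ z = z → z = 0 ∨ z = 1 := by
    intro z hz
    by_contra hcon
    push_neg at hcon
    obtain ⟨hz0, hz1⟩ := hcon
    -- then K = {0,1,z,z+1} and τ fixes all of them, contradiction with τ ≠ id
    have h10 : (1 : K) ≠ 0 := one_ne_zero
    have hz10 : z + 1 ≠ 0 := fun h => hz1 (by linear_combination h - h2)
    have hz11 : z + 1 ≠ 1 := fun h => hz0 (by linear_combination h)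
    have hz1z : z + 1 ≠ z := fun h => h10 (by linear_combination h)
    -- the four distinct elements
    have huniv : ∀ x : K, x = 0 ∨ x = 1 ∨ x = z ∨ x = z + 1 := by
      intro x
      by_contra hx
      push_neg at hx
      obtain ⟨h0, h1, hzx, hz1x⟩ := hx
      -- 5 distinct elements in a 4-element type: contradiction
      have : ({0, 1, z, z + 1, x} : Set K).ncard = 5 := by
        rw [Set.ncard_insert_of_notMem (by simp [h10.symm, hz0.symm, hz10.symm, Ne.symm h0]) (Set.toFinite _),
          Set.ncard_insert_of_notMem (by simp [hz1.symm, hz11.symm, Ne.symm h1]) (Set.toFinite _),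
          Set.ncard_insert_of_notMem (by simp [hz1z.symm, Ne.symm hzx]) (Set.toFinite _),
          Set.ncard_insert_of_notMem (by simp [Ne.symm h0, Ne.symm h1, Ne.symm hzx, Ne.symm hz1x]) (Set.toFinite _),
          Set.ncard_singleton]
      have hle : ({0, 1, z, z + 1, x} : Set K).ncard ≤ Nat.card K := by
        rw [← Set.ncard_univ]
        exact Set.ncard_le_ncard (Set.subset_univ _) (Set.toFinite _)
      omega
    apply hτne
    funext x
    rcases huniv x with rfl | rfl | rfl | rfl
    · simp
    · simp
    · simpa using hz
    · simp only [map_add, map_one, hz, id_eq]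
  intro x hx0
  have hfixN : τ (x * τ x) = x * τ x := by
    rw [map_mul, hτ2]; ring
  rcases hfix _ hfixN with h | h
  · rcases mul_eq_zero.mp h with h' | h'
    · exact absurd h' hx0
    · exfalso
      apply hx0
      have := congrArg τ h'
      rwa [hτ2, map_zero] at this
  · exact h

-- |K| ≠ 4, char 2, τ ≠ id: there is a fixed point outside {0,1}
lemma exists_fixed (hτne : (⇑τ : K → K) ≠ id) (hτ2 : ∀ x, τ (τ x) = x)
    (hcard : Nat.card K ≠ 4) (h2 : (2 : K) = 0) :
    ∃ t : K, τ t = t ∧ t ≠ 0 ∧ t ≠ 1 := by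
  by_contra hcon
  push_neg at hcon
  -- every x : x + τ x ∈ {0,1}
  apply hcard
  obtain ⟨y, hy⟩ : ∃ y : K, τ y ≠ y := by
    by_contra hc; push_neg at hc; exact hτne (funext fun x => hc x)
  have hy0 : y ≠ 0 := fun h => hy (by rw [h, map_zero])
  have hy1 : y ≠ 1 := fun h => hy (by rw [h, map_one])
  have hcon' : ∀ t : K, τ t = t → t = 0 ∨ t = 1 := by
    intro t ht
    by_cases h : t = 0
    · exact Or.inl h
    · exact Or.inr (hcon t ht h)
  refine card_eq_four_of_quad h2 ?_ hy0 hy1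
  intro x hx0 hx1
  have htr : τ (x + τ x) = x + τ x := by rw [map_add, hτ2]; ring
  have hN : τ (x * τ x) = x * τ x := by rw [map_mul, hτ2]; ring
  rcases hcon' _ htr with h | h
  ·
    exfalso
    have hτx : τ x = x := by linear_combination h - x * h2
    rcases hcon' _ hτx with h' | h' <;> [exact hx0 h'; exact hx1 h']
  · -- x + τ x = 1
    have hτx : τ x = 1 + x := by linear_combination h - x * h2
    rcases hcon' _ hN with h' | h'
    · exfalso
      rcases mul_eq_zero.mp h' with h'' | h''
      · exact hx0 h''
      · apply hx0
        have := congrArg τ h''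
        rwa [hτ2, map_zero] at this
    · -- x * τ x = 1 with τ x = 1 + x
      rw [hτx] at h'
      linear_combination h' + h2



-- ## n = 2

section Ntwo

variable (hτne : (⇑τ : K → K) ≠ id) (hτ2 : ∀ x, τ (τ x) = x)

lemma norms_neg_one_card (hτne : (⇑τ : K → K) ≠ id) (hτ2 : ∀ x, τ (τ x) = x)
    (h : ∀ a : K, a ≠ 0 → a * τ a = -1) : Nat.card K = 4 := by
  have h1 : (1 : K) * τ 1 = -1 := h 1 one_ne_zero
  have h2 : (2 : K) = 0 := by
    rw [map_one, mul_one] at h1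
    linear_combination h1
  obtain ⟨y, hy⟩ : ∃ y : K, τ y ≠ y := by
    by_contra hc; push_neg at hc
    exact hτne (funext fun x => hc x)
  have hy0 : y ≠ 0 := fun hh => hy (by rw [hh, map_zero])
  have hy1 : y ≠ 1 := fun hh => hy (by rw [hh, map_one])
  refine card_eq_four_of_quad h2 ?_ hy0 hy1
  intro x hx0 hx1
  have hx10 : x + 1 ≠ 0 := by
    intro hh
    exact hx1 (by linear_combination hh - h2)
  have e1 : x * τ x = -1 := h x hx0
  have e2 : (x + 1) * τ (x + 1) = -1 := h (x + 1) hx10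
  rw [map_add, map_one] at e2
  -- e2: (x+1)(τx + 1) = -1 => xτx + x + τx + 1 = -1 => τx = -1 - x
  have hτx : τ x = -1 - x := by linear_combination e2 - e1
  rw [hτx] at e1
  linear_combination -e1 + h2

/-- the standard basis vector as vertex data -/
lemma psi_e0_e0 {n : ℕ} (hn : 0 < n) : True := trivial

lemma n2_vec_cases (hτne : (⇑τ : K → K) ≠ id) (hτ2 : ∀ x, τ (τ x) = x)
    (hcard : Nat.card K = 4) {v : Fin 2 → K} (hv : Psi (⇑τ) v v ≠ 0) :
    Submodule.span K {v} = Submodule.span K {![(1:K),0]} ∨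
    Submodule.span K {v} = Submodule.span K {![(0:K),1]} := by
  obtain ⟨h2, hnorm⟩ := card_four_props τ hτne hτ2 hcard
  have hexp : Psi (⇑τ) v v = v 0 * τ (v 0) + v 1 * τ (v 1) := by
    simp [Psi, Fin.sum_univ_two]
  by_cases h0 : v 0 = 0
  · by_cases h1 : v 1 = 0
    · exfalso; apply hv; rw [hexp, h0, h1]; simp
    · right
      have hveq : v = v 1 • ![(0:K),1] := by
        funext i; fin_cases i <;> simp [h0]
      rw [hveq, Submodule.span_singleton_smul_eq (IsUnit.mk0 _ h1)]
  · by_cases h1 : v 1 = 0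
    · left
      have hveq : v = v 0 • ![(1:K),0] := by
        funext i; fin_cases i <;> simp [h1]
      rw [hveq, Submodule.span_singleton_smul_eq (IsUnit.mk0 _ h0)]
    · exfalso
      apply hv
      rw [hexp, hnorm _ h0, hnorm _ h1]
      linear_combination h2

lemma n2_connected (hτne : (⇑τ : K → K) ≠ id) (hτ2 : ∀ x, τ (τ x) = x)
    (hcard : Nat.card K = 4) : (FrameGraph τ hτ2 2).Connected := by
  have hpe0 : Psi (⇑τ) ![(1:K),0] ![(1:K),0] ≠ 0 := by
    simp [Psi, Fin.sum_univ_two]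
  have hpe1 : Psi (⇑τ) ![(0:K),1] ![(0:K),1] ≠ 0 := by
    simp [Psi, Fin.sum_univ_two]
  have hadj : (FrameGraph τ hτ2 2).Adj ⟨_, vertex_of τ hpe0⟩ ⟨_, vertex_of τ hpe1⟩ :=
    adj_of τ hτ2 hpe0 hpe1 (by simp [Psi, Fin.sum_univ_two])
  rw [SimpleGraph.connected_iff]
  refine ⟨?_, ⟨⟨_, vertex_of τ hpe0⟩⟩⟩
  -- preconnected
  · intro S W
    have key : ∀ X : {S : Submodule K (Fin 2 → K) // IsVertex (⇑τ) S},
        X = ⟨_, vertex_of τ hpe0⟩ ∨ X = ⟨_, vertex_of τ hpe1⟩ := by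
      intro X
      obtain ⟨v, hXv, hv⟩ := exists_gen τ X.2
      rcases n2_vec_cases τ hτne hτ2 hcard hv with h | h
      · left; exact Subtype.ext (by rw [hXv, h])
      · right; exact Subtype.ext (by rw [hXv, h])
    rcases key S with rfl | rfl <;> rcases key W with rfl | rfl
    · exact SimpleGraph.Reachable.refl _
    · exact hadj.reachable
    · exact hadj.symm.reachable
    · exact SimpleGraph.Reachable.refl _

lemma n2_disconnected (hτne : (⇑τ : K → K) ≠ id) (hτ2 : ∀ x, τ (τ x) = x)
    (hcard : Nat.card K ≠ 4) : ¬ (FrameGraph τ hτ2 2).Connected := by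
  intro hconn
  -- get a ≠ 0 with 1 + a τ a ≠ 0
  obtain ⟨a, ha0, ha⟩ : ∃ a : K, a ≠ 0 ∧ 1 + a * τ a ≠ 0 := by
    by_contra hc
    push_neg at hc
    apply hcard
    apply norms_neg_one_card τ hτne hτ2
    intro x hx
    have := hc x hx
    linear_combination this
  have hpe0 : Psi (⇑τ) ![(1:K),0] ![(1:K),0] ≠ 0 := by
    simp [Psi, Fin.sum_univ_two]
  have hpe1 : Psi (⇑τ) ![(0:K),1] ![(0:K),1] ≠ 0 := by
    simp [Psi, Fin.sum_univ_two]
  have hpv : Psi (⇑τ) ![(1:K),a] ![(1:K),a] ≠ 0 := by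
    simpa [Psi, Fin.sum_univ_two] using ha
  set E0 : {S : Submodule K (Fin 2 → K) // IsVertex (⇑τ) S} := ⟨_, vertex_of τ hpe0⟩
  set E1 : {S : Submodule K (Fin 2 → K) // IsVertex (⇑τ) S} := ⟨_, vertex_of τ hpe1⟩
  set Sv : {S : Submodule K (Fin 2 → K) // IsVertex (⇑τ) S} := ⟨_, vertex_of τ hpv⟩
  have htrap : ∀ X Y, (FrameGraph τ hτ2 2).Adj X Y → (X = E0 ∨ X = E1) → (Y = E0 ∨ Y = E1) := by
    rintro X Y ⟨hne, hadj⟩ hX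
    obtain ⟨w, hYw, hw⟩ := exists_gen τ Y.2
    have hwY : w ∈ Y.1 := by rw [hYw]; exact Submodule.mem_span_singleton_self w
    rcases hX with rfl | rfl
    · -- X = E0: Psi e0 w = 0 gives w 0 = 0
      have h := hadj ![(1:K),0] (Submodule.mem_span_singleton_self _) w hwY
      have hw0 : w 0 = 0 := by
        have : τ (w 0) = 0 := by
          simpa [Psi, Fin.sum_univ_two] using h
        have := congrArg τ this
        rwa [hτ2, map_zero] at this
      have hw1 : w 1 ≠ 0 := by
        intro h1
        apply hw
        have : w = 0 := by funext i; fin_cases i <;> simpa [hw0]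
        rw [this]; exact Psi_zero_self τ
      right
      apply Subtype.ext
      rw [hYw]
      have hveq : w = w 1 • ![(0:K),1] := by funext i; fin_cases i <;> simp [hw0]
      rw [hveq, Submodule.span_singleton_smul_eq (IsUnit.mk0 _ hw1)]
    · -- X = E1
      have h := hadj ![(0:K),1] (Submodule.mem_span_singleton_self _) w hwY
      have hw1 : w 1 = 0 := by
        have : τ (w 1) = 0 := by
          simpa [Psi, Fin.sum_univ_two] using h
        have := congrArg τ this
        rwa [hτ2, map_zero] at this
      have hw0 : w 0 ≠ 0 := by
        intro h1
        apply hw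
        have : w = 0 := by funext i; fin_cases i <;> simpa [hw1]
        rw [this]; exact Psi_zero_self τ
      left
      apply Subtype.ext
      rw [hYw]
      have hveq : w = w 0 • ![(1:K),0] := by funext i; fin_cases i <;> simp [hw1]
      rw [hveq, Submodule.span_singleton_smul_eq (IsUnit.mk0 _ hw0)]
  have hreach : (FrameGraph τ hτ2 2).Reachable E0 Sv := hconn.preconnected E0 Sv
  have := walk_trap _ htrap hreach (Or.inl rfl)
  rcases this with h | h
  · -- Sv = E0: contradiction
    have h' : Submodule.span K {![(1:K),a]} = Submodule.span K {![(1:K),0]} :=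
      congrArg Subtype.val h
    have : (![(1:K),a] : Fin 2 → K) ∈ Submodule.span K {![(1:K),0]} := by
      rw [← h']; exact Submodule.mem_span_singleton_self _
    obtain ⟨c, hc⟩ := Submodule.mem_span_singleton.mp this
    have h1 : c * 1 = 1 := by
      have := congrFun hc 0; simpa using this
    have h2' : c * 0 = a := by
      have := congrFun hc 1; simpa using this
    apply ha0; rw [← h2']; ring
  · have h' : Submodule.span K {![(1:K),a]} = Submodule.span K {![(0:K),1]} :=
      congrArg Subtype.val h
    have : (![(1:K),a] : Fin 2 → K) ∈ Submodule.span K {![(0:K),1]} := by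
      rw [← h']; exact Submodule.mem_span_singleton_self _
    obtain ⟨c, hc⟩ := Submodule.mem_span_singleton.mp this
    have h1 : c * 0 = 1 := by
      have := congrFun hc 0; simpa using this
    rw [mul_zero] at h1
    exact one_ne_zero h1.symm

end Ntwo


-- ## n ≥ 4

section Nfour

lemma mem_perp_iff {n : ℕ} {S : Submodule K (Fin n → K)} {x : Fin n → K} :
    x ∈ perp (⇑τ) S ↔ ∀ s ∈ S, Psi (⇑τ) x s = 0 := Iff.rfl

lemma aniso_exists {n : ℕ} (hτne : (⇑τ : K → K) ≠ id) (hτ2 : ∀ x, τ (τ x) = x)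
    {S : Submodule K (Fin n → K)} (hnd : Nondeg (⇑τ) S) (hne : S ≠ ⊥) :
    ∃ z ∈ S, Psi (⇑τ) z z ≠ 0 := by
  by_contra hc
  push_neg at hc
  have htot := totally_isotropic τ hτ2 hτne hc
  apply hne
  rw [← hnd]
  rw [inf_eq_left.mpr]
  intro x hx
  exact fun s hs => htot x hx s hs

lemma perp_perp {n : ℕ} (hτ2 : ∀ x, τ (τ x) = x) [RingHomSurjective τ]
    {v : Fin n → K} (hv : Psi (⇑τ) v v ≠ 0) (hn : 1 ≤ n) :
    perp (⇑τ) (perp (⇑τ) (Submodule.span K {v})) = Submodule.span K {v} := by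
  have hv0 : v ≠ 0 := by rintro rfl; exact hv (Psi_zero_self τ)
  have hle : Submodule.span K {v} ≤ perp (⇑τ) (perp (⇑τ) (Submodule.span K {v})) := by
    rw [Submodule.span_le]
    rintro x hx
    rcases hx with rfl
    intro s hs
    rw [Psi_conj τ hτ2 s x]
    rw [hs x (Submodule.mem_span_singleton_self x), map_zero]
  have h1 : Module.finrank K (Submodule.span K {v}) = 1 := finrank_span_singleton hv0
  have h2 := finrank_perp τ hτ2 (Submodule.span K {v})
  have h3 := finrank_perp τ hτ2 (perp (⇑τ) (Submodule.span K {v}))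
  rw [h2, h1] at h3
  exact (Submodule.eq_of_le_of_finrank_le hle (by omega)).symm

lemma perp_span_nondeg {n : ℕ} (hτ2 : ∀ x, τ (τ x) = x) [RingHomSurjective τ]
    {v : Fin n → K} (hv : Psi (⇑τ) v v ≠ 0) (hn : 1 ≤ n) :
    Nondeg (⇑τ) (perp (⇑τ) (Submodule.span K {v})) := by
  rw [Nondeg, perp_perp τ hτ2 hv hn, Submodule.eq_bot_iff]
  rintro x ⟨hx1, hx2⟩
  obtain ⟨c, rfl⟩ := Submodule.mem_span_singleton.mp hx2
  have := hx1 v (Submodule.mem_span_singleton_self v)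
  rw [Psi_smul_left] at this
  rcases mul_eq_zero.mp this with h | h
  · rw [h, zero_smul]
  · exact absurd h hv

lemma n4_connected (hτne : (⇑τ : K → K) ≠ id) (hτ2 : ∀ x, τ (τ x) = x)
    [RingHomSurjective τ] {n : ℕ} (hn : 4 ≤ n) : (FrameGraph τ hτ2 n).Connected := by
  have hne0 : (0 : ℕ) < n := by omega
  set i0 : Fin n := ⟨0, hne0⟩
  have hpe0 : Psi (⇑τ) (Pi.single i0 (1:K)) (Pi.single i0 (1:K)) ≠ 0 := by
    have : Psi (⇑τ) (Pi.single i0 (1:K)) (Pi.single i0 (1:K)) = 1 := by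
      simp [Psi, Pi.single_apply, Finset.sum_ite_eq']
    rw [this]; exact one_ne_zero
  rw [SimpleGraph.connected_iff]
  refine ⟨?_, ⟨⟨_, vertex_of τ hpe0⟩⟩⟩
  intro S W
  obtain ⟨u, hSu, hu⟩ := exists_gen τ S.2
  obtain ⟨v, hWv, hv⟩ := exists_gen τ W.2
  -- z anisotropic in perp (span v)
  obtain ⟨z, hzmem, hz⟩ : ∃ z ∈ perp (⇑τ) (Submodule.span K {v}), Psi (⇑τ) z z ≠ 0 := by
    apply aniso_exists τ hτne hτ2 (perp_span_nondeg τ hτ2 hv (by omega))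
    intro hbot
    have := finrank_perp τ hτ2 (Submodule.span K {v})
    rw [hbot, finrank_span_singleton (by rintro rfl; exact hv (Psi_zero_self τ))] at this
    simp only [finrank_bot] at this
    omega
  have hzv : Psi (⇑τ) z v = 0 := hzmem v (Submodule.mem_span_singleton_self v)
  -- w anisotropic in perp (span z ⊔ span u)
  set U2 : Submodule K (Fin n → K) := Submodule.span K {z} ⊔ Submodule.span K {u} with hU2
  set W2 : Submodule K (Fin n → K) := perp (⇑τ) U2 with hW2
  have huU2 : u ∈ U2 := Submodule.mem_sup_right (Submodule.mem_span_singleton_self u)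
  have hzU2 : z ∈ U2 := Submodule.mem_sup_left (Submodule.mem_span_singleton_self z)
  have hfU2 : Module.finrank K U2 ≤ 2 := by
    have := Submodule.finrank_sup_add_finrank_inf_eq (Submodule.span K {z}) (Submodule.span K {u})
    have h1 : Module.finrank K (Submodule.span K {z}) = 1 :=
      finrank_span_singleton (by rintro rfl; exact hz (Psi_zero_self τ))
    have h2 : Module.finrank K (Submodule.span K {u}) = 1 :=
      finrank_span_singleton (by rintro rfl; exact hu (Psi_zero_self τ))
    rw [← hU2] at this
    omega
  obtain ⟨w, hwmem, hw⟩ : ∃ w ∈ W2, Psi (⇑τ) w w ≠ 0 := by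
    by_contra hc
    push_neg at hc
    have htot := totally_isotropic τ hτ2 hτne hc
    have hW2le : W2 ≤ perp (⇑τ) W2 := fun x hx => fun s hs => htot x hx s hs
    have huperp : u ∈ perp (⇑τ) W2 := by
      intro x hx
      rw [Psi_conj τ hτ2 x u, hx u huU2, map_zero]
    have e1 := finrank_perp τ hτ2 U2
    have e2 := finrank_perp τ hτ2 W2
    rw [← hW2] at e1
    have hm := Submodule.finrank_mono hW2le
    have hU2n : Module.finrank K U2 ≤ n := by
      have := Submodule.finrank_le U2
      simpa [Module.finrank_fintype_fun_eq_card] using this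
    have hWeq : W2 = perp (⇑τ) W2 := by
      apply Submodule.eq_of_le_of_finrank_le hW2le
      omega
    rw [← hWeq] at huperp
    exact hu (hc u huperp)
  have hwu : Psi (⇑τ) w u = 0 := hwmem u huU2
  have hwz : Psi (⇑τ) w z = 0 := hwmem z hzU2
  -- now build walk: S=span u ~ span w ~ span z ~ span v = W
  have hS : S = ⟨_, vertex_of τ hu⟩ := Subtype.ext hSu
  have hW : W = ⟨_, vertex_of τ hv⟩ := Subtype.ext hWv
  rw [hS, hW]
  have a1 : (FrameGraph τ hτ2 n).Adj ⟨_, vertex_of τ hu⟩ ⟨_, vertex_of τ hw⟩ :=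
    adj_of τ hτ2 hu hw (by rw [Psi_conj τ hτ2 w u, hwu, map_zero])
  have a2 : (FrameGraph τ hτ2 n).Adj ⟨_, vertex_of τ hw⟩ ⟨_, vertex_of τ hz⟩ :=
    adj_of τ hτ2 hw hz hwz
  have a3 : (FrameGraph τ hτ2 n).Adj ⟨_, vertex_of τ hz⟩ ⟨_, vertex_of τ hv⟩ :=
    adj_of τ hτ2 hz hv hzv
  exact (a1.reachable.trans a2.reachable).trans a3.reachable

end Nfour


-- ## n = 3

section Nthree

variable [RingHomSurjective τ]

lemma hpe0_3 : Psi (⇑τ) ![(1:K),0,0] ![(1:K),0,0] ≠ 0 := by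
  simp [Psi, Fin.sum_univ_three]

lemma reach_e0 (hτne : (⇑τ : K → K) ≠ id) (hτ2 : ∀ x, τ (τ x) = x)
    {v : Fin 3 → K} (hv : Psi (⇑τ) v v ≠ 0)
    (hgood : v 0 = 0 ∨ (v 1 = 0 ∧ v 2 = 0) ∨ v 1 * τ (v 1) + v 2 * τ (v 2) ≠ 0) :
    (FrameGraph τ hτ2 3).Reachable ⟨_, vertex_of τ hv⟩ ⟨_, vertex_of τ (hpe0_3 τ)⟩ := by
  rcases hgood with h0 | ⟨h1, h2⟩ | hN
  · -- v 0 = 0 : direct edge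
    refine (adj_of τ hτ2 hv (hpe0_3 τ) ?_).reachable
    simpa [Psi, Fin.sum_univ_three] using h0
  · -- v is a multiple of e0
    have hv0 : v 0 ≠ 0 := by
      intro h0
      apply hv
      have : v = 0 := by funext i; fin_cases i <;> simp [h0, h1, h2]
      rw [this]; exact Psi_zero_self τ
    have hveq : v = v 0 • ![(1:K),0,0] := by
      funext i; fin_cases i <;> simp [h1, h2]
    have : Submodule.span K {v} = Submodule.span K {![(1:K),0,0]} := by
      rw [hveq, Submodule.span_singleton_smul_eq (IsUnit.mk0 _ hv0)]
    rw [show (⟨_, vertex_of τ hv⟩ :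
        {S : Submodule K (Fin 3 → K) // IsVertex (⇑τ) S}) = ⟨_, vertex_of τ (hpe0_3 τ)⟩
        from Subtype.ext this]
  · -- middle vertex w
    have hpw : Psi (⇑τ) ![(0:K), τ (v 2), -τ (v 1)] ![(0:K), τ (v 2), -τ (v 1)] ≠ 0 := by
      have : Psi (⇑τ) ![(0:K), τ (v 2), -τ (v 1)] ![(0:K), τ (v 2), -τ (v 1)]
          = v 1 * τ (v 1) + v 2 * τ (v 2) := by
        simp [Psi, Fin.sum_univ_three, map_neg, hτ2]
        ring
      rw [this]; exact hN
    have a1 : (FrameGraph τ hτ2 3).Adj ⟨_, vertex_of τ hv⟩ ⟨_, vertex_of τ hpw⟩ := by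
      apply adj_of τ hτ2 hv hpw
      rw [Psi_conj τ hτ2 _ v]
      have : Psi (⇑τ) ![(0:K), τ (v 2), -τ (v 1)] v = 0 := by
        simp [Psi, Fin.sum_univ_three, map_neg, hτ2]
        ring
      rw [this, map_zero]
    have a2 : (FrameGraph τ hτ2 3).Adj ⟨_, vertex_of τ hpw⟩ ⟨_, vertex_of τ (hpe0_3 τ)⟩ := by
      apply adj_of τ hτ2 hpw (hpe0_3 τ)
      simp [Psi, Fin.sum_univ_three]
    exact a1.reachable.trans a2.reachable

lemma n3_reach_all (hτne : (⇑τ : K → K) ≠ id) (hτ2 : ∀ x, τ (τ x) = x)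
    (hcard : Nat.card K ≠ 4) {v : Fin 3 → K} (hv : Psi (⇑τ) v v ≠ 0) :
    (FrameGraph τ hτ2 3).Reachable ⟨_, vertex_of τ hv⟩ ⟨_, vertex_of τ (hpe0_3 τ)⟩ := by
  by_cases hgood : v 0 = 0 ∨ (v 1 = 0 ∧ v 2 = 0) ∨ v 1 * τ (v 1) + v 2 * τ (v 2) ≠ 0
  · exact reach_e0 τ hτne hτ2 hv hgood
  push_neg at hgood
  obtain ⟨ha, hbc, hN0⟩ := hgood
  -- here: v 0 ≠ 0, (v1,v2) ≠ 0, v1 τv1 + v2 τv2 = 0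
  have hτinj : Function.Injective (⇑τ) := τ.injective
  have hb : v 1 ≠ 0 := by
    intro h1
    rw [h1] at hN0
    simp only [map_zero, mul_zero, zero_mul, zero_add] at hN0
    rcases mul_eq_zero.mp hN0 with h | h
    · exact hbc h1 h
    · exact hbc h1 (by simpa using hτinj (h.trans (map_zero τ).symm))
  have hc : v 2 ≠ 0 := by
    intro h2
    rw [h2] at hN0
    simp only [map_zero, mul_zero, zero_mul, add_zero] at hN0
    rcases mul_eq_zero.mp hN0 with h | h
    · exact hb h
    · exact hb (by simpa using hτinj (h.trans (map_zero τ).symm))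
  have hNa : v 0 * τ (v 0) ≠ 0 := by
    intro h
    apply hv
    have hexp : Psi (⇑τ) v v = v 0 * τ (v 0) + (v 1 * τ (v 1) + v 2 * τ (v 2)) := by
      simp [Psi, Fin.sum_univ_three]; ring
    rw [hexp, h, hN0, add_zero]
  -- the generic construction
  set V' : K → (Fin 3 → K) :=
    fun α => ![α * τ (v 1) + τ (v 2), -(α * τ (v 0)), -τ (v 0)] with hV'
  have gid : ∀ α : K, Psi (⇑τ) (V' α) (V' α) =
      α * τ α * (v 1 * τ (v 1)) + α * (τ (v 1) * v 2) + τ α * (v 1 * τ (v 2))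
        + v 2 * τ (v 2) + α * τ α * (v 0 * τ (v 0)) + v 0 * τ (v 0) := by
    intro α
    simp [hV', Psi, Fin.sum_univ_three, map_neg, map_add, map_mul, hτ2]
    ring
  have hnormid : ∀ α : K, V' α 1 * τ (V' α 1) + V' α 2 * τ (V' α 2) =
      α * τ α * (v 0 * τ (v 0)) + v 0 * τ (v 0) := by
    intro α
    simp [hV', map_neg, map_add, map_mul, hτ2]
    ring
  have horth : ∀ α : K, Psi (⇑τ) (V' α) v = 0 := by
    intro α
    simp [hV', Psi, Fin.sum_univ_three, map_neg, map_add, map_mul, hτ2]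
    ring
  have hfinish : ∀ α : K, Psi (⇑τ) (V' α) (V' α) ≠ 0 →
      α * τ α * (v 0 * τ (v 0)) + v 0 * τ (v 0) ≠ 0 →
      (FrameGraph τ hτ2 3).Reachable ⟨_, vertex_of τ hv⟩ ⟨_, vertex_of τ (hpe0_3 τ)⟩ := by
    intro α hani hcond
    have hgood' : V' α 0 = 0 ∨ (V' α 1 = 0 ∧ V' α 2 = 0) ∨
        V' α 1 * τ (V' α 1) + V' α 2 * τ (V' α 2) ≠ 0 := by
      right; right
      rw [hnormid α]; exact hcond
    have hr := reach_e0 τ hτne hτ2 hani hgood'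
    have hedge : (FrameGraph τ hτ2 3).Adj ⟨_, vertex_of τ hv⟩ ⟨_, vertex_of τ hani⟩ := by
      apply adj_of τ hτ2 hv hani
      rw [Psi_conj τ hτ2 (V' α) v, horth α, map_zero]
    exact hedge.reachable.trans hr
  -- case analysis
  by_cases hab : v 0 * τ (v 0) ≠ v 1 * τ (v 1)
  · -- α = 0
    apply hfinish 0
    · rw [gid 0]
      intro h
      apply hab
      simp only [map_zero, mul_zero, zero_mul, zero_add, add_zero] at h
      -- h : v 2 * τ (v 2) + v 0 * τ (v 0) = 0  (approximately)
      linear_combination h - hN0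
    · simp only [map_zero, mul_zero, zero_mul, zero_add]
      exact hNa
  push_neg at hab
  by_cases h2K : (2 : K) = 0
  · -- characteristic 2 case
    obtain ⟨t, htf, ht0, ht1⟩ := exists_fixed τ hτne hτ2 hcard h2K
    obtain ⟨y, hy⟩ : ∃ y : K, τ y ≠ y := by
      by_contra hcon; push_neg at hcon; exact hτne (funext fun x => hcon x)
    have hytr : y + τ y ≠ 0 := by
      intro h
      apply hy
      linear_combination h - y * h2K
    set m1 : K := τ (v 1) * v 2 with hm1
    set m2 : K := v 1 * τ (v 2) with hm2
    have hm1ne : m1 ≠ 0 := by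
      apply mul_ne_zero _ hc
      intro h; exact hb (by simpa using hτinj (h.trans (map_zero τ).symm))
    have hm2ne : m2 ≠ 0 := by
      apply mul_ne_zero hb
      intro h; exact hc (by simpa using hτinj (h.trans (map_zero τ).symm))
    have hτm2 : τ m2 = m1 := by rw [hm2, hm1, map_mul, hτ2]
    have hτm1 : τ m1 = m2 := by rw [hm1, hm2, map_mul, hτ2]
    -- candidate α = s * y * m2, s ∈ {1, t} fixed
    have hgen : ∀ s : K, τ s = s → s ≠ 0 → Psi (⇑τ) (V' (s * y * m2)) (V' (s * y * m2)) ≠ 0 := by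
      intro s hsf hs0
      rw [gid]
      have hτα : τ (s * y * m2) = s * τ y * m1 := by
        rw [map_mul, map_mul, hsf, hτm2]
      rw [hτα]
      intro h
      -- h should reduce to s * m1 * m2 * (y + τ y) = 0 using hab, hN0, h2K
      have : s * (m1 * m2) * (y + τ y) = 0 := by
        rw [hm1, hm2]
        rw [hm1, hm2] at h
        linear_combination h -
            (s * y * (v 1 * τ (v 2)) * (s * τ y * (τ (v 1) * v 2)) * (v 0 * τ (v 0))) * h2K +
            (s * y * (v 1 * τ (v 2)) * (s * τ y * (τ (v 1) * v 2)) - 1) * hab - hN0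
      rcases mul_eq_zero.mp this with h' | h'
      · rcases mul_eq_zero.mp h' with h'' | h''
        · exact hs0 h''
        · rcases mul_eq_zero.mp h'' with h3 | h3
          · exact hm1ne h3
          · exact hm2ne h3
      · exact hytr h'
    have hcondgen : ∀ s : K, τ s = s →
        (s * y * m2) * τ (s * y * m2) = s * s * (y * τ y) * (m1 * m2) := by
      intro s hsf
      rw [map_mul, map_mul, hsf, hτm2]
      ring
    set m : K := y * τ y * (m1 * m2) with hm
    by_cases hmval : m = 1
    · -- use s = t
      apply hfinish (t * y * m2)
      · exact hgen t htf ht0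
      · rw [hcondgen t htf]
        intro h
        have hmval' : y * τ y * (m1 * m2) = 1 := by rw [← hm]; exact hmval
        -- t^2 * m + 1 = 0 with m = 1 : (t+1)^2 = 0
        have ht2 : (t + 1) * (t + 1) * (v 0 * τ (v 0)) = 0 := by
          linear_combination h - (t * t * (v 0 * τ (v 0))) * hmval' + (t * (v 0 * τ (v 0))) * h2K
        rcases mul_eq_zero.mp ht2 with h' | h'
        · rcases mul_eq_zero.mp h' with h'' | h''
          · exact ht1 (by linear_combination h'' - h2K)
          · exact ht1 (by linear_combination h'' - h2K)
        · exact hNa h'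
    · -- use s = 1
      apply hfinish (1 * y * m2)
      · exact hgen 1 (map_one τ) one_ne_zero
      · rw [hcondgen 1 (map_one τ)]
        intro h
        apply hmval
        have hY : (y * τ y * (m1 * m2) + 1) * (v 0 * τ (v 0)) = 0 := by
          linear_combination h
        rcases mul_eq_zero.mp hY with h' | h'
        · rw [hm]; linear_combination h' - h2K
        · exact absurd h' hNa
  · -- characteristic ≠ 2 case : α = 1 or α = -1
    by_cases hg1 : Psi (⇑τ) (V' 1) (V' 1) = 0
    · apply hfinish (-1)
      · rw [gid (-1)]
        rw [gid 1] at hg1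
        simp only [map_one, map_neg] at hg1 ⊢
        intro h
        -- hg1 + h gives 4 * v0 τ v0 + 2*(bτb + cτc) = 0 roughly
        have h4 : (2:K) * (2:K) * (v 0 * τ (v 0)) = 0 := by
          linear_combination hg1 + h - 2 * hN0
        rcases mul_eq_zero.mp h4 with h' | h'
        · rcases mul_eq_zero.mp h' with h'' | h'' <;> exact h2K h''
        · exact hNa h'
      · simp only [map_neg, map_one]
        intro h
        have : (2:K) * (v 0 * τ (v 0)) = 0 := by linear_combination h
        rcases mul_eq_zero.mp this with h' | h'
        · exact h2K h'
        · exact hNa h'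
    · apply hfinish 1
      · exact hg1
      · simp only [map_one]
        intro h
        have : (2:K) * (v 0 * τ (v 0)) = 0 := by linear_combination h
        rcases mul_eq_zero.mp this with h' | h'
        · exact h2K h'
        · exact hNa h'

lemma n3_connected (hτne : (⇑τ : K → K) ≠ id) (hτ2 : ∀ x, τ (τ x) = x)
    (hcard : Nat.card K ≠ 4) : (FrameGraph τ hτ2 3).Connected := by
  rw [SimpleGraph.connected_iff]
  refine ⟨?_, ⟨⟨_, vertex_of τ (hpe0_3 τ)⟩⟩⟩
  intro S W
  obtain ⟨u, hSu, hu⟩ := exists_gen τ S.2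
  obtain ⟨v, hWv, hv⟩ := exists_gen τ W.2
  have hS : S = ⟨_, vertex_of τ hu⟩ := Subtype.ext hSu
  have hW : W = ⟨_, vertex_of τ hv⟩ := Subtype.ext hWv
  rw [hS, hW]
  exact (n3_reach_all τ hτne hτ2 hcard hu).trans (n3_reach_all τ hτne hτ2 hcard hv).symm

end Nthree


-- ## n = 3, |K| = 4 : disconnected

section NthreeF4

variable [RingHomSurjective τ]

lemma n3_disconnected (hτne : (⇑τ : K → K) ≠ id) (hτ2 : ∀ x, τ (τ x) = x)
    (hcard : Nat.card K = 4) : ¬ (FrameGraph τ hτ2 3).Connected := by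
  intro hconn
  obtain ⟨h2, hnorm⟩ := card_four_props τ hτne hτ2 hcard
  have hτinj : Function.Injective (⇑τ) := τ.injective
  -- classification of vertices with a zero coordinate
  have hclass : ∀ w : Fin 3 → K, Psi (⇑τ) w w ≠ 0 →
      (w 0 = 0 ∨ w 1 = 0 ∨ w 2 = 0) →
      (Submodule.span K {w} = Submodule.span K {![(1:K),0,0]} ∨
       Submodule.span K {w} = Submodule.span K {![(0:K),1,0]} ∨
       Submodule.span K {w} = Submodule.span K {![(0:K),0,1]}) := by
    intro w hw hzero
    have hexp : Psi (⇑τ) w w = w 0 * τ (w 0) + w 1 * τ (w 1) + w 2 * τ (w 2) := by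
      simp [Psi, Fin.sum_univ_three]
    by_cases h0 : w 0 = 0 <;> by_cases h1 : w 1 = 0 <;> by_cases hh2 : w 2 = 0
    · exfalso; apply hw; rw [hexp, h0, h1, hh2]; simp
    · right; right
      have : w = w 2 • ![(0:K),0,1] := by funext i; fin_cases i <;> simp [h0, h1]
      rw [this, Submodule.span_singleton_smul_eq (IsUnit.mk0 _ hh2)]
    · right; left
      have : w = w 1 • ![(0:K),1,0] := by funext i; fin_cases i <;> simp [h0, hh2]
      rw [this, Submodule.span_singleton_smul_eq (IsUnit.mk0 _ h1)]
    · exfalso; apply hw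
      rw [hexp, h0, hnorm _ h1, hnorm _ hh2]
      linear_combination h2
    · left
      have : w = w 0 • ![(1:K),0,0] := by funext i; fin_cases i <;> simp [h1, hh2]
      rw [this, Submodule.span_singleton_smul_eq (IsUnit.mk0 _ h0)]
    · exfalso; apply hw
      rw [hexp, h1, hnorm _ h0, hnorm _ hh2]
      linear_combination h2
    · exfalso; apply hw
      rw [hexp, hh2, hnorm _ h0, hnorm _ h1]
      linear_combination h2
    · exfalso
      rcases hzero with h | h | h
      exacts [h0 h, h1 h, hh2 h]
  have hpe0 : Psi (⇑τ) ![(1:K),0,0] ![(1:K),0,0] ≠ 0 := hpe0_3 τ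
  have hpe1 : Psi (⇑τ) ![(0:K),1,0] ![(0:K),1,0] ≠ 0 := by
    simp [Psi, Fin.sum_univ_three]
  have hpe2 : Psi (⇑τ) ![(0:K),0,1] ![(0:K),0,1] ≠ 0 := by
    simp [Psi, Fin.sum_univ_three]
  have hpv : Psi (⇑τ) ![(1:K),1,1] ![(1:K),1,1] ≠ 0 := by
    have : Psi (⇑τ) ![(1:K),1,1] ![(1:K),1,1] = 3 := by
      simp [Psi, Fin.sum_univ_three]
      ring
    rw [this]
    intro h
    have : (1 : K) = 0 := by linear_combination h - h2
    exact one_ne_zero this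
  set E0 : {S : Submodule K (Fin 3 → K) // IsVertex (⇑τ) S} := ⟨_, vertex_of τ hpe0⟩
  set E1 : {S : Submodule K (Fin 3 → K) // IsVertex (⇑τ) S} := ⟨_, vertex_of τ hpe1⟩
  set E2 : {S : Submodule K (Fin 3 → K) // IsVertex (⇑τ) S} := ⟨_, vertex_of τ hpe2⟩
  set Sv : {S : Submodule K (Fin 3 → K) // IsVertex (⇑τ) S} := ⟨_, vertex_of τ hpv⟩
  have htrap : ∀ X Y, (FrameGraph τ hτ2 3).Adj X Y →
      (X = E0 ∨ X = E1 ∨ X = E2) → (Y = E0 ∨ Y = E1 ∨ Y = E2) := by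
    rintro X Y ⟨hne, hadj⟩ hX
    obtain ⟨w, hYw, hw⟩ := exists_gen τ Y.2
    have hwY : w ∈ Y.1 := by rw [hYw]; exact Submodule.mem_span_singleton_self w
    have hzero : w 0 = 0 ∨ w 1 = 0 ∨ w 2 = 0 := by
      rcases hX with rfl | rfl | rfl
      · left
        have h := hadj ![(1:K),0,0] (Submodule.mem_span_singleton_self _) w hwY
        have : τ (w 0) = 0 := by simpa [Psi, Fin.sum_univ_three] using h
        simpa using hτinj (this.trans (map_zero τ).symm)
      · right; left
        have h := hadj ![(0:K),1,0] (Submodule.mem_span_singleton_self _) w hwY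
        have : τ (w 1) = 0 := by simpa [Psi, Fin.sum_univ_three] using h
        simpa using hτinj (this.trans (map_zero τ).symm)
      · right; right
        have h := hadj ![(0:K),0,1] (Submodule.mem_span_singleton_self _) w hwY
        have : τ (w 2) = 0 := by simpa [Psi, Fin.sum_univ_three] using h
        simpa using hτinj (this.trans (map_zero τ).symm)
    rcases hclass w hw hzero with h | h | h
    · left; exact Subtype.ext (by rw [hYw, h])
    · right; left; exact Subtype.ext (by rw [hYw, h])
    · right; right; exact Subtype.ext (by rw [hYw, h])
  have hreach : (FrameGraph τ hτ2 3).Reachable E0 Sv := hconn.preconnected E0 Sv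
  have hSv := walk_trap _ htrap hreach (Or.inl rfl)
  have hmem : (![(1:K),1,1] : Fin 3 → K) ∈ Submodule.span K {![(1:K),1,1]} :=
    Submodule.mem_span_singleton_self _
  rcases hSv with h | h | h
  · have h' : Submodule.span K {![(1:K),1,1]} = Submodule.span K {![(1:K),0,0]} :=
      congrArg Subtype.val h
    rw [h'] at hmem
    obtain ⟨c, hcc⟩ := Submodule.mem_span_singleton.mp hmem
    have := congrFun hcc 1
    simp at this
  · have h' : Submodule.span K {![(1:K),1,1]} = Submodule.span K {![(0:K),1,0]} :=
      congrArg Subtype.val h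
    rw [h'] at hmem
    obtain ⟨c, hcc⟩ := Submodule.mem_span_singleton.mp hmem
    have := congrFun hcc 0
    simp at this
  · have h' : Submodule.span K {![(1:K),1,1]} = Submodule.span K {![(0:K),0,1]} :=
      congrArg Subtype.val h
    rw [h'] at hmem
    obtain ⟨c, hcc⟩ := Submodule.mem_span_singleton.mp hmem
    have := congrFun hcc 0
    simp at this

end NthreeF4

/-- For `n ≥ 2`, under condition (ON), the graph `G(V)` is connected
if and only if (a) `n = 2` and `K` has exactly `4` elements, or (b) `n = 3` and `K` does
not have exactly `4` elements, or (c) `n ≥ 4`. -/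
theorem statement0 (τ : K →+* K) (hτne : (⇑τ : K → K) ≠ id) (hτ2 : ∀ x, τ (τ x) = x)
    (n : ℕ) (hn : 2 ≤ n)
    (hON : ∀ v : Fin n → K, ∃ x : K, Psi (⇑τ) v v = x * τ x) :
    (FrameGraph τ hτ2 n).Connected ↔
      ((n = 2 ∧ Nat.card K = 4) ∨ (n = 3 ∧ Nat.card K ≠ 4) ∨ 4 ≤ n) := by
  haveI : RingHomSurjective τ := ⟨fun x => ⟨τ x, hτ2 x⟩⟩
  constructor
  · intro hconn
    by_contra hcon
    push_neg at hcon
    obtain ⟨h1, h2, h3⟩ := hcon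
    interval_cases n
    · exact n2_disconnected τ hτne hτ2 (h1 rfl) hconn
    · exact n3_disconnected τ hτne hτ2 (h2 rfl) hconn
  · rintro (⟨rfl, hcard⟩ | ⟨rfl, hcard⟩ | h4)
    · exact n2_connected τ hτne hτ2 hcard
    · exact n3_connected τ hτne hτ2 hcard
    · exact n4_connected τ hτne hτ2 h4

end FramePaper
end

section
/- Let n ≥ 2 and assume condition (ON). Then there exists a nonzero vector v ∈ V with Ψ(v,v) = 0 if and only if there exists ζ ∈ K with ζ · τ(ζ) = −1. -/
namespace FramePaper

variable {K : Type*} [Field K]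

/-- For `n ≥ 2`, under condition (ON), there exists a nonzero isotropic
vector in `V` iff there exists `ζ ∈ K` with `ζ * τ(ζ) = -1`. -/
theorem statement6 (τ : K →+* K) (hτne : (⇑τ : K → K) ≠ id) (hτ2 : ∀ x, τ (τ x) = x)
    (n : ℕ) (hn : 2 ≤ n)
    (hON : ∀ v : Fin n → K, ∃ x : K, Psi (⇑τ) v v = x * τ x) :
    (∃ v : Fin n → K, v ≠ 0 ∧ Psi (⇑τ) v v = 0) ↔ (∃ ζ : K, ζ * τ ζ = -1) := by
  constructor
  · rintro ⟨v, hv, hiso⟩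
    obtain ⟨i, hi⟩ : ∃ i, v i ≠ 0 := by
      by_contra h
      push_neg at h
      exact hv (funext h)
    obtain ⟨x, hx⟩ := hON (Function.update v i 0)
    have hupd : ∀ j, Function.update v i 0 j * τ (Function.update v i 0 j)
        = Function.update (fun j => v j * τ (v j)) i 0 j := by
      intro j
      by_cases hji : j = i
      · subst hji; simp
      · simp [Function.update_of_ne hji]
    have hsum : Psi (⇑τ) (Function.update v i 0) (Function.update v i 0)
        = Psi (⇑τ) v v - v i * τ (v i) := by
      unfold Psi
      simp only [hupd]
      rw [Finset.sum_update_of_mem (Finset.mem_univ i), zero_add,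
        Finset.sum_sdiff_eq_sub (Finset.subset_univ {i}), Finset.sum_singleton]
    rw [hiso, zero_sub] at hsum
    rw [hsum] at hx
    have hτi : τ (v i) ≠ 0 := (map_ne_zero τ).mpr hi
    refine ⟨x / v i, ?_⟩
    rw [map_div₀]
    have hτi' : τ (v i) ≠ 0 := hτi
    field_simp
    linear_combination -hx
  · rintro ⟨ζ, hζ⟩
    set i0 : Fin n := ⟨0, by omega⟩
    set i1 : Fin n := ⟨1, by omega⟩
    have hne : i0 ≠ i1 := by simp [i0, i1, Fin.ext_iff]
    set v : Fin n → K := fun j => if j = i0 then ζ else if j = i1 then 1 else 0 with hvdef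
    refine ⟨v, ?_, ?_⟩
    · intro h
      have := congrFun h i1
      simp [hvdef, hne.symm] at this
    · unfold Psi
      have : ∀ j, v j * τ (v j)
          = (if j = i0 then ζ * τ ζ else 0) + (if j = i1 then 1 else 0) := by
        intro j
        by_cases h0 : j = i0
        · subst h0; simp [hvdef, hne]
        · by_cases h1 : j = i1
          · subst h1; simp [hvdef, hne.symm, h0]
          · simp [hvdef, h0, h1]
      simp only [this, Finset.sum_add_distrib, Finset.sum_ite_eq', Finset.mem_univ, if_true]
      rw [hζ]; ring


end FramePaper
end
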